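/- For all positive integers n and k, c_n^*(k) = ∑_{d ∣ n, rad(n) ∣ d} c_d(k), where the sum runs over the divisors d of n divisible by rad(n), c_d(k) is the classical Ramanujan sum and c_n^*(k) is the unitary Ramanujan sum. -/

import Mathlib

open Complex Finset

/-- The unitary gcd `(j,n)_*`: the largest `d` with `d ∣ j`, `d ∣ n` and `gcd(d, n/d) = 1`. -/
def ugcd (j n : ℕ) : ℕ :=
  Nat.findGreatest (fun d => d ∣ j ∧ d ∣ n ∧ Nat.gcd d (n / d) = 1) n

/-- The classical Ramanujan sum `c_n(k) = ∑_{1 ≤ j ≤ n, gcd(j,n) = 1} exp(2πijk/n)`. -/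
noncomputable def ramanujanSum (n k : ℕ) : ℂ :=
  ∑ j ∈ (Finset.Icc 1 n).filter (fun j => Nat.gcd j n = 1),
    Complex.exp (2 * Real.pi * Complex.I * j * k / n)

/-- The unitary Ramanujan sum `c_n^*(k) = ∑_{1 ≤ j ≤ n, (j,n)_* = 1} exp(2πijk/n)`. -/
noncomputable def unitaryRamanujanSum (n k : ℕ) : ℂ :=
  ∑ j ∈ (Finset.Icc 1 n).filter (fun j => ugcd j n = 1),
    Complex.exp (2 * Real.pi * Complex.I * j * k / n)

/-- The squarefree kernel `rad(n) = ∏_{p ∣ n} p`. -/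
def rad (n : ℕ) : ℕ := ∏ p ∈ n.primeFactors, p

lemma rad_dvd_iff {n m : ℕ} : rad n ∣ m ↔ ∀ p ∈ n.primeFactors, p ∣ m :=
  ⟨fun h p hp => (Finset.dvd_prod_of_mem _ hp).trans h,
   fun h => Finset.prod_primes_dvd m (fun p hp => (Nat.prime_of_mem_primeFactors hp).prime) h⟩

lemma fact_lemma {p n g : ℕ} (hp : p.Prime) (hn : n ≠ 0) (hg : g ∣ n) :
    ¬ p ∣ n / g ↔ p ^ n.factorization p ∣ g := by
  have hg0 : g ≠ 0 := fun h => hn (by simpa [h] using (Nat.eq_zero_of_zero_dvd (h ▸ hg)))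
  have hng0 : n / g ≠ 0 := Nat.div_ne_zero_iff_of_dvd hg |>.mpr ⟨hn, hg0⟩
  have key : n.factorization p = g.factorization p + (n / g).factorization p := by
    conv_lhs => rw [← Nat.mul_div_cancel' hg]
    rw [Nat.factorization_mul hg0 hng0]; simp
  rw [Nat.Prime.pow_dvd_iff_le_factorization hp hg0,
    Nat.Prime.dvd_iff_one_le_factorization hp hng0]
  omega

lemma ugcd_eq_one_iff {j n : ℕ} (hn : 1 ≤ n) :
    ugcd j n = 1 ↔ rad n ∣ n / Nat.gcd j n := by
  have hn0 : n ≠ 0 := by omega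
  have hgd : Nat.gcd j n ∣ n := Nat.gcd_dvd_right j n
  constructor
  · intro h
    rw [rad_dvd_iff]
    intro p hp
    by_contra hpd
    have hpp := Nat.prime_of_mem_primeFactors hp
    have hpow : p ^ n.factorization p ∣ Nat.gcd j n := (fact_lemma hpp hn0 hgd).mp hpd
    set e := p ^ n.factorization p with he
    have hfpos : 1 ≤ n.factorization p := by
      rw [← Nat.Prime.dvd_iff_one_le_factorization hpp hn0]
      exact Nat.dvd_of_mem_primeFactors hp
    have he1 : 1 < e := by
      calc 1 < p := hpp.one_lt
      _ ≤ p ^ n.factorization p := Nat.le_self_pow (by omega) p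
    have hedn : e ∣ n := Nat.ordProj_dvd n p
    have hP : e ∣ j ∧ e ∣ n ∧ Nat.gcd e (n / e) = 1 := by
      refine ⟨hpow.trans (Nat.gcd_dvd_left j n), hedn, ?_⟩
      exact Nat.Coprime.pow_left _ (Nat.coprime_ordCompl hpp hn0)
    have := Nat.le_findGreatest (P := fun d => d ∣ j ∧ d ∣ n ∧ Nat.gcd d (n / d) = 1)
      (Nat.le_of_dvd (by omega) hedn) hP
    rw [ugcd] at h
    omega
  · intro h
    rw [ugcd, Nat.findGreatest_eq_iff]
    refine ⟨hn, fun _ => ⟨one_dvd _, one_dvd _, by simp⟩, ?_⟩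
    rintro e he1 hen ⟨hej, hedn, hcop⟩
    obtain ⟨p, hpp, hpe⟩ := Nat.exists_prime_and_dvd (by omega : e ≠ 1)
    have hpne : ¬ p ∣ n / e := by
      intro hd
      have : p ∣ Nat.gcd e (n / e) := Nat.dvd_gcd hpe hd
      rw [hcop] at this
      exact hpp.one_lt.ne' (Nat.eq_one_of_dvd_one this |>.symm ▸ rfl)
    have hpow : p ^ n.factorization p ∣ e := (fact_lemma hpp hn0 hedn).mp hpne
    have hpg : p ^ n.factorization p ∣ Nat.gcd j n :=
      Nat.dvd_gcd (hpow.trans hej) (hpow.trans hedn)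
    have hpnd : ¬ p ∣ n / Nat.gcd j n := (fact_lemma hpp hn0 hgd).mpr hpg
    exact hpnd ((rad_dvd_iff.mp h) p (Nat.mem_primeFactors.mpr ⟨hpp, hpe.trans hedn, hn0⟩))

lemma ramanujanSum_eq {n d : ℕ} (hn : 1 ≤ n) (hd : d ∣ n) (k : ℕ) :
    ramanujanSum d k = ∑ j ∈ (Finset.Icc 1 n).filter (fun j => Nat.gcd j n = n / d),
      Complex.exp (2 * Real.pi * Complex.I * j * k / n) := by
  have hd0 : d ≠ 0 := fun h => by simp [h] at hd; omega
  set m := n / d with hm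
  have hdm : d * m = n := Nat.mul_div_cancel' hd
  have hm0 : 0 < m := by
    rcases Nat.eq_zero_or_pos m with h | h
    · rw [h, mul_zero] at hdm; omega
    · exact h
  rw [ramanujanSum]
  refine Finset.sum_nbij' (i := fun j' => j' * m) (j := fun j => j / m) ?_ ?_ ?_ ?_ ?_
  · intro j' hj'
    simp only [mem_filter, mem_Icc] at hj' ⊢
    obtain ⟨⟨h1, h2⟩, h3⟩ := hj'
    refine ⟨⟨Nat.one_le_iff_ne_zero.mpr (Nat.mul_ne_zero (by omega) (by omega)), ?_⟩, ?_⟩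
    · calc j' * m ≤ d * m := Nat.mul_le_mul_right m h2
        _ = n := hdm
    · rw [← hdm, Nat.gcd_mul_right, h3, one_mul]
  · intro j hj
    simp only [mem_filter, mem_Icc] at hj ⊢
    obtain ⟨⟨h1, h2⟩, h3⟩ := hj
    have hmj : m ∣ j := h3 ▸ Nat.gcd_dvd_left j n
    obtain ⟨t, ht⟩ := hmj
    subst ht
    rw [Nat.mul_div_cancel_left t hm0]
    have ht1 : 1 ≤ t := by
      rcases Nat.eq_zero_or_pos t with h | h
      · subst h; simp at h1
      · exact h
    refine ⟨⟨ht1, ?_⟩, ?_⟩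
    · rw [← hdm] at h2; exact Nat.le_of_mul_le_mul_left (h2.trans_eq (mul_comm d m)) hm0
    · rw [← hdm, mul_comm m t, Nat.gcd_mul_right] at h3
      have hh : Nat.gcd t d * m = 1 * m := by rw [one_mul]; exact h3
      exact Nat.eq_of_mul_eq_mul_right hm0 hh
  · intro j' _; exact Nat.mul_div_cancel j' hm0
  · intro j hj
    simp only [mem_filter, mem_Icc] at hj
    have hmj : m ∣ j := hj.2 ▸ Nat.gcd_dvd_left j n
    exact Nat.div_mul_cancel hmj
  · intro j' hj'
    congr 1
    rw [← hdm]
    have hd' : (d : ℂ) ≠ 0 := Nat.cast_ne_zero.mpr hd0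
    have hm' : (m : ℂ) ≠ 0 := Nat.cast_ne_zero.mpr (by omega)
    push_cast
    field_simp

theorem stmt9 (n k : ℕ) (hn : 1 ≤ n) (hk : 1 ≤ k) :
    unitaryRamanujanSum n k =
      ∑ d ∈ n.divisors.filter (fun d => rad n ∣ d), ramanujanSum d k := by
  have hn0 : n ≠ 0 := by omega
  set D := n.divisors.filter (fun d => rad n ∣ d) with hD
  set S : ℕ → Finset ℕ := fun d => (Finset.Icc 1 n).filter (fun j => Nat.gcd j n = n / d)
    with hS
  have hstep : ∀ d ∈ D, ramanujanSum d k =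
      ∑ j ∈ S d, Complex.exp (2 * Real.pi * Complex.I * j * k / n) := by
    intro d hd
    rw [hD, mem_filter, Nat.mem_divisors] at hd
    exact ramanujanSum_eq hn hd.1.1 k
  rw [Finset.sum_congr rfl hstep]
  rw [← Finset.sum_biUnion]
  · rw [unitaryRamanujanSum]
    congr 1
    ext j
    simp only [Finset.mem_biUnion, hS, hD, mem_filter, mem_Icc, Nat.mem_divisors]
    constructor
    · rintro ⟨⟨hj1, hjn⟩, hu⟩
      rw [ugcd_eq_one_iff hn] at hu
      refine ⟨n / Nat.gcd j n, ⟨⟨Nat.div_dvd_of_dvd (Nat.gcd_dvd_right j n), hn0⟩, hu⟩,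
        ⟨hj1, hjn⟩, ?_⟩
      rw [Nat.div_div_self (Nat.gcd_dvd_right j n) hn0]
    · rintro ⟨d, ⟨⟨hdn, _⟩, hrad⟩, ⟨hj1, hjn⟩, hg⟩
      refine ⟨⟨hj1, hjn⟩, ?_⟩
      rw [ugcd_eq_one_iff hn, hg, Nat.div_div_self hdn hn0]
      exact hrad
  · intro d1 h1 d2 h2 hne
    rw [Finset.mem_coe, hD, mem_filter, Nat.mem_divisors] at h1 h2
    apply Finset.disjoint_left.mpr
    intro j hj1 hj2
    simp only [hS, mem_filter] at hj1 hj2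
    apply hne
    have hd1 : d1 = n / (n / d1) := (Nat.div_div_self h1.1.1 hn0).symm
    have hd2 : d2 = n / (n / d2) := (Nat.div_div_self h2.1.1 hn0).symm
    rw [hd1, hd2, ← hj1.2, ← hj2.2]
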